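/- If the systems C and D of the eight-element four-qubit product set S are merged into a single ℂ⁴ factor, the resulting set of eight pairwise orthogonal product vectors in ℂ²_A ⊗ ℂ²_B ⊗ ℂ⁴_{CD} is NOT an unextendible product basis: there exists a nonzero product vector u ⊗ v ⊗ w (u, v ∈ ℂ², w ∈ ℂ⁴) orthogonal to all eight members of the merged set. (In fact w may be chosen orthogonal to |0⟩⊗|0⟩, |1⟩⊗a₄' and a₃⊗a₄, with u = a₁ and v = a₂'.) -/

import Mathlib

open scoped BigOperators

/-- The qubit vector `(cos θ, sin θ)`. -/
noncomputable def ketp (θ : ℝ) : Fin 2 → ℂ := ![(Real.cos θ : ℂ), (Real.sin θ : ℂ)]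

/-- The qubit vector `(sin θ, -cos θ)`, orthogonal to `ketp θ`. -/
noncomputable def ketm (θ : ℝ) : Fin 2 → ℂ := ![(Real.sin θ : ℂ), -(Real.cos θ : ℂ)]

/-- The qubit basis vector `|0⟩ = (1,0)`. -/
noncomputable def ket0 : Fin 2 → ℂ := ![1, 0]

/-- The qubit basis vector `|1⟩ = (0,1)`. -/
noncomputable def ket1 : Fin 2 → ℂ := ![0, 1]

/-- Tensor product of four qubit vectors, as a function on the four-qubit index set. -/
noncomputable def tp4 (p q r s : Fin 2 → ℂ) : Fin 2 × Fin 2 × Fin 2 × Fin 2 → ℂ :=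
  fun x => p x.1 * q x.2.1 * r x.2.2.1 * s x.2.2.2

/-- Standard (conjugate-linear in the first slot) inner product on the four-qubit space. -/
noncomputable def ip4 (f g : Fin 2 × Fin 2 × Fin 2 × Fin 2 → ℂ) : ℂ :=
  ∑ x, (starRingEnd ℂ) (f x) * g x

/-- The eight members of the four-qubit product set `S`, with (A,B,C,D) components as in the
paper: rows `(0,0,0,0)`, `(1,a₂,a₃',a₄)`, `(0,a₂,a₃',1)`, `(1,a₂,a₃',a₄')`, `(a₁,a₂',1,a₄')`,
`(a₁',1,a₃,b₄)`, `(a₁,1,a₃,a₄)`, `(a₁',a₂',1,b₄')`. -/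
noncomputable def S4 (x₁ x₂ x₃ x₄ y₄ : ℝ) : Fin 8 → (Fin 2 × Fin 2 × Fin 2 × Fin 2 → ℂ) :=
  ![tp4 ket0 ket0 ket0 ket0,
    tp4 ket1 (ketp x₂) (ketm x₃) (ketp x₄),
    tp4 ket0 (ketp x₂) (ketm x₃) ket1,
    tp4 ket1 (ketp x₂) (ketm x₃) (ketm x₄),
    tp4 (ketp x₁) (ketm x₂) ket1 (ketm x₄),
    tp4 (ketm x₁) ket1 (ketp x₃) (ketp y₄),
    tp4 (ketp x₁) ket1 (ketp x₃) (ketp x₄),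
    tp4 (ketm x₁) (ketm x₂) ket1 (ketm y₄)]


noncomputable def Wv (x₃ x₄ : ℝ) : Fin 2 × Fin 2 → ℂ := fun p =>
  ![![(0 : ℂ), -(Real.sin x₃ : ℂ)],
    ![((Real.cos x₃ * Real.sin x₄ * Real.cos x₄ : ℝ) : ℂ),
      ((Real.cos x₃ * Real.sin x₄ * Real.sin x₄ : ℝ) : ℂ)]] p.1 p.2

lemma ip4_factor (u v p q r s : Fin 2 → ℂ) (w : Fin 2 × Fin 2 → ℂ) :
    ip4 (fun x : Fin 2 × Fin 2 × Fin 2 × Fin 2 => u x.1 * v x.2.1 * w x.2.2) (tp4 p q r s)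
      = (∑ i, (starRingEnd ℂ) (u i) * p i) * (∑ j, (starRingEnd ℂ) (v j) * q j) *
        (∑ c : Fin 2, ∑ d : Fin 2, (starRingEnd ℂ) (w (c, d)) * (r c * s d)) := by
  simp only [ip4, tp4, Fintype.sum_prod_type, Fin.sum_univ_two, map_mul]
  ring

/-- Merging systems C and D of the four-qubit product set `S` into a single `ℂ⁴` factor, the resulting set of eight orthogonal product vectors in `ℂ²_A ⊗ ℂ²_B ⊗ ℂ⁴_{CD}` is NOT an unextendible product basis: some nonzero product vector `u ⊗ v ⊗ w` is orthogonal to all eight members. -/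
theorem stmt0 (x₁ x₂ x₃ x₄ y₄ : ℝ)
    (hx₁ : x₁ ∈ Set.Ioo 0 (Real.pi / 2)) (hx₂ : x₂ ∈ Set.Ioo 0 (Real.pi / 2))
    (hx₃ : x₃ ∈ Set.Ioo 0 (Real.pi / 2)) (hx₄ : x₄ ∈ Set.Ioo 0 (Real.pi / 2))
    (hy₄ : y₄ ∈ Set.Ioo 0 (Real.pi / 2)) (hne : x₄ ≠ y₄) :
    ∃ (u v : Fin 2 → ℂ) (w : Fin 2 × Fin 2 → ℂ),
      (fun x : Fin 2 × Fin 2 × Fin 2 × Fin 2 => u x.1 * v x.2.1 * w x.2.2) ≠ 0 ∧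
      ∀ k : Fin 8, ip4 (fun x : Fin 2 × Fin 2 × Fin 2 × Fin 2 => u x.1 * v x.2.1 * w x.2.2) (S4 x₁ x₂ x₃ x₄ y₄ k) = 0 := by
  have hc1 : Real.cos x₁ ≠ 0 :=
    (Real.cos_pos_of_mem_Ioo ⟨by linarith [hx₁.1, Real.pi_pos], hx₁.2⟩).ne'
  have hs2 : Real.sin x₂ ≠ 0 :=
    (Real.sin_pos_of_pos_of_lt_pi hx₂.1 (by linarith [hx₂.2, Real.pi_pos])).ne'
  have hs3 : Real.sin x₃ ≠ 0 :=
    (Real.sin_pos_of_pos_of_lt_pi hx₃.1 (by linarith [hx₃.2, Real.pi_pos])).ne'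
  have keyC : (Real.sin x₄ : ℂ) ^ 2 + (Real.cos x₄ : ℂ) ^ 2 = 1 := by
    exact_mod_cast congrArg (Complex.ofReal) (Real.sin_sq_add_cos_sq x₄)
  refine ⟨ketp x₁, ketm x₂, Wv x₃ x₄, ?_, ?_⟩
  · intro h
    have h0 := congrFun h (0, 0, 0, 1)
    simp only [ketp, ketm, Wv, Matrix.cons_val_zero, Matrix.cons_val_one, Matrix.head_cons,
      Pi.zero_apply, mul_eq_zero] at h0
    rcases h0 with (h0 | h0) | h0
    · exact hc1 (by exact_mod_cast h0)
    · exact hs2 (by exact_mod_cast h0)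
    · exact hs3 (by simpa [Complex.sin_ofReal_re] using congrArg Complex.re h0)
  · intro k
    fin_cases k
    · exact (ip4_factor (ketp x₁) (ketm x₂) ket0 ket0 ket0 ket0 (Wv x₃ x₄)).trans (by
        simp only [ketp, ketm, ket0, ket1, Wv, Fin.sum_univ_two, Matrix.cons_val_zero,
          Matrix.cons_val_one, Matrix.head_cons, map_neg, map_zero, map_one, map_mul, map_pow,
          Complex.conj_ofReal, mul_zero, zero_mul, mul_one, one_mul, add_zero, zero_add, neg_zero,
          Complex.ofReal_mul, Complex.ofReal_pow] <;> ring)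
    · exact (ip4_factor (ketp x₁) (ketm x₂) ket1 (ketp x₂) (ketm x₃) (ketp x₄)
        (Wv x₃ x₄)).trans (by
        simp only [ketp, ketm, ket0, ket1, Wv, Fin.sum_univ_two, Matrix.cons_val_zero,
          Matrix.cons_val_one, Matrix.head_cons, map_neg, map_zero, map_one, map_mul, map_pow,
          Complex.conj_ofReal, mul_zero, zero_mul, mul_one, one_mul, add_zero, zero_add, neg_zero,
          Complex.ofReal_mul, Complex.ofReal_pow] <;> ring)
    · exact (ip4_factor (ketp x₁) (ketm x₂) ket0 (ketp x₂) (ketm x₃) ket1 (Wv x₃ x₄)).trans (by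
        simp only [ketp, ketm, ket0, ket1, Wv, Fin.sum_univ_two, Matrix.cons_val_zero,
          Matrix.cons_val_one, Matrix.head_cons, map_neg, map_zero, map_one, map_mul, map_pow,
          Complex.conj_ofReal, mul_zero, zero_mul, mul_one, one_mul, add_zero, zero_add, neg_zero,
          Complex.ofReal_mul, Complex.ofReal_pow] <;> ring)
    · exact (ip4_factor (ketp x₁) (ketm x₂) ket1 (ketp x₂) (ketm x₃) (ketm x₄)
        (Wv x₃ x₄)).trans (by
        simp only [ketp, ketm, ket0, ket1, Wv, Fin.sum_univ_two, Matrix.cons_val_zero,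
          Matrix.cons_val_one, Matrix.head_cons, map_neg, map_zero, map_one, map_mul, map_pow,
          Complex.conj_ofReal, mul_zero, zero_mul, mul_one, one_mul, add_zero, zero_add, neg_zero,
          Complex.ofReal_mul, Complex.ofReal_pow] <;> ring)
    · exact (ip4_factor (ketp x₁) (ketm x₂) (ketp x₁) (ketm x₂) ket1 (ketm x₄)
        (Wv x₃ x₄)).trans (by
        simp only [ketp, ketm, ket0, ket1, Wv, Fin.sum_univ_two, Matrix.cons_val_zero,
          Matrix.cons_val_one, Matrix.head_cons, map_neg, map_zero, map_one, map_mul, map_pow,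
          Complex.conj_ofReal, mul_zero, zero_mul, mul_one, one_mul, add_zero, zero_add, neg_zero,
          Complex.ofReal_mul, Complex.ofReal_pow] <;> ring)
    · exact (ip4_factor (ketp x₁) (ketm x₂) (ketm x₁) ket1 (ketp x₃) (ketp y₄)
        (Wv x₃ x₄)).trans (by
        simp only [ketp, ketm, ket0, ket1, Wv, Fin.sum_univ_two, Matrix.cons_val_zero,
          Matrix.cons_val_one, Matrix.head_cons, map_neg, map_zero, map_one, map_mul, map_pow,
          Complex.conj_ofReal, mul_zero, zero_mul, mul_one, one_mul, add_zero, zero_add, neg_zero,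
          Complex.ofReal_mul, Complex.ofReal_pow] <;> ring)
    · exact (ip4_factor (ketp x₁) (ketm x₂) (ketp x₁) ket1 (ketp x₃) (ketp x₄)
        (Wv x₃ x₄)).trans (by
        simp only [ketp, ketm, ket0, ket1, Wv, Fin.sum_univ_two, Matrix.cons_val_zero,
          Matrix.cons_val_one, Matrix.head_cons, map_neg, map_zero, map_one, map_mul, map_pow,
          Complex.conj_ofReal, mul_zero, zero_mul, mul_one, one_mul, add_zero, zero_add, neg_zero,
          Complex.ofReal_mul, Complex.ofReal_pow]
        ring_nf
        linear_combination (-((Real.cos x₁ : ℂ) ^ 2 + (Real.sin x₁ : ℂ) ^ 2) *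
          (Real.cos x₂ : ℂ) * (Real.cos x₃ : ℂ) * (Real.sin x₃ : ℂ) * (Real.sin x₄ : ℂ)) * keyC)
    · exact (ip4_factor (ketp x₁) (ketm x₂) (ketm x₁) (ketm x₂) ket1 (ketm y₄)
        (Wv x₃ x₄)).trans (by
        simp only [ketp, ketm, ket0, ket1, Wv, Fin.sum_univ_two, Matrix.cons_val_zero,
          Matrix.cons_val_one, Matrix.head_cons, map_neg, map_zero, map_one, map_mul, map_pow,
          Complex.conj_ofReal, mul_zero, zero_mul, mul_one, one_mul, add_zero, zero_add, neg_zero,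
          Complex.ofReal_mul, Complex.ofReal_pow] <;> ring)
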